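/- arXiv:2307.07676 — 7 statements merged into one kernel-verified Lean document; each statement's English description precedes it below -/
import Mathlib

section
/- Let G1=(V1,E1,ℓ1) and G2=(V2,E2,ℓ2) be finite acyclic labeled graphs with single-character vertex labels, and let v1∈V1, v2∈V2 with ℓ1(v1)=ℓ2(v2). Then L(v1,v2) = 1 + max({L(u1,u2) : (u1,v1)∈E1, (u2,v2)∈E2} ∪ {0}). -/
open List Relation

section Defs

variable {V V1 V2 V3 α : Type*}

/-- A (directed) path: a nonempty list of vertices, consecutive ones joined by edges. -/
def IsPath (E : V → V → Prop) (p : List V) : Prop :=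
  p ≠ [] ∧ p.Chain' E

/-- Paths ending at `v` (the set `P(v)`). -/
def EndsAt (E : V → V → Prop) (v : V) (p : List V) : Prop :=
  IsPath E p ∧ p.getLast? = some v

/-- A path is left-maximal if its first vertex has no in-coming edges. -/
def LeftMax (E : V → V → Prop) (p : List V) : Prop :=
  ∀ w u, p.head? = some w → ¬ E u w

/-- A path is right-maximal if its last vertex has no out-going edges. -/
def RightMax (E : V → V → Prop) (p : List V) : Prop :=
  ∀ w u, p.getLast? = some w → ¬ E w u

/-- `Subseq(ℓ(P(v)))`: subsequences of label strings of paths ending at `v`. -/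
def SubseqAt (E : V → V → Prop) (ℓ : V → α) (v : V) : Set (List α) :=
  {z | ∃ p, EndsAt E v p ∧ z.Sublist (p.map ℓ)}

/-- `Subseq(ℓ(LMP(v)))`: subsequences of label strings of left-maximal paths ending at `v`. -/
def SubseqLM (E : V → V → Prop) (ℓ : V → α) (v : V) : Set (List α) :=
  {z | ∃ p, EndsAt E v p ∧ LeftMax E p ∧ z.Sublist (p.map ℓ)}

/-- `Subseq(G)`: subsequences of label strings of all paths of `G`. -/
def SubseqG (E : V → V → Prop) (ℓ : V → α) : Set (List α) :=
  {z | ∃ p, IsPath E p ∧ z.Sublist (p.map ℓ)}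

/-- A graph is acyclic if no vertex lies on a nonempty cycle. -/
def Acyclic (E : V → V → Prop) : Prop :=
  ∀ v, ¬ Relation.TransGen E v v

/-- The set `S_IC(v1,v2,v3)`. -/
def SIC (E1 : V1 → V1 → Prop) (ℓ1 : V1 → α) (E2 : V2 → V2 → Prop) (ℓ2 : V2 → α)
    (E3 : V3 → V3 → Prop) (ℓ3 : V3 → α) (v1 : V1) (v2 : V2) (v3 : V3) :
    Set (List α) :=
  {z | (∃ q, EndsAt E3 v3 q ∧ LeftMax E3 q ∧ (q.map ℓ3).Sublist z) ∧
       z ∈ SubseqAt E1 ℓ1 v1 ∧ z ∈ SubseqAt E2 ℓ2 v2}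

/-- Maximum length of a string in `S`, with `⊥` (= −∞) for `S = ∅`. -/
noncomputable def maxLen (S : Set (List α)) : WithBot ℕ :=
  sSup ((fun z : List α => (z.length : WithBot ℕ)) '' S)

/-- `L(v1,v2)`: the maximum length of a common subsequence (as a natural number). -/
noncomputable def Lval (E1 : V1 → V1 → Prop) (ℓ1 : V1 → α)
    (E2 : V2 → V2 → Prop) (ℓ2 : V2 → α) (v1 : V1) (v2 : V2) : ℕ :=
  sSup {n | ∃ z ∈ SubseqAt E1 ℓ1 v1 ∩ SubseqAt E2 ℓ2 v2, n = z.length}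

/-- `D(v1,v2,v3)`: the maximum length of a string in `S_IC(v1,v2,v3)`, `−∞` if empty. -/
noncomputable def Dval (E1 : V1 → V1 → Prop) (ℓ1 : V1 → α) (E2 : V2 → V2 → Prop) (ℓ2 : V2 → α)
    (E3 : V3 → V3 → Prop) (ℓ3 : V3 → α) (v1 : V1) (v2 : V2) (v3 : V3) : WithBot ℕ :=
  maxLen (SIC E1 ℓ1 E2 ℓ2 E3 ℓ3 v1 v2 v3)

end Defs


section Helpers

variable {V W α β : Type*}

private lemma sublist_tail_of_cons_sublist {a : β} {s t : List β}
    (h : (a :: s).Sublist t) : s.Sublist t.tail := by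
  cases h with
  | cons b h' => exact (List.sublist_cons_self a s).trans h'
  | cons_cons _ h' => exact h'

private lemma reverse_tail_eq (t : List β) : t.reverse.tail = t.dropLast.reverse := by
  rcases List.eq_nil_or_concat t with rfl | ⟨L, b, rfl⟩
  · rfl
  · simp [List.concat_eq_append, List.reverse_concat, List.dropLast_concat]

private lemma concat_sublist_dropLast {a : β} {s t : List β}
    (h : (s ++ [a]).Sublist t) : s.Sublist t.dropLast := by
  have h' : (a :: s.reverse).Sublist t.reverse := by
    rw [← List.reverse_concat]; exact h.reverse
  have h2 := sublist_tail_of_cons_sublist h'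
  rw [reverse_tail_eq] at h2
  exact List.reverse_sublist.mp h2

private lemma chain'_transGen {E : V → V → Prop} {p : List V} (h : p.Chain' E) :
    ∀ j (hj : j < p.length) i (hi : i < j),
      Relation.TransGen E (p.get ⟨i, lt_trans hi hj⟩) (p.get ⟨j, hj⟩) := by
  intro j
  induction j with
  | zero => omega
  | succ k ih =>
    intro hj i hi
    have step : E (p.get ⟨k, by omega⟩) (p.get ⟨k + 1, hj⟩) := by
      have := List.isChain_iff_getElem.mp h k (by omega)
      convert this using 2 <;> rfl
    rcases eq_or_lt_of_le (Nat.lt_succ_iff.mp hi) with rfl | hik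
    · exact Relation.TransGen.single step
    · exact Relation.TransGen.tail (ih (by omega) i hik) step

private lemma chain'_nodup {E : V → V → Prop} (hE : Acyclic E) {p : List V}
    (h : p.Chain' E) : p.Nodup := by
  rw [List.nodup_iff_injective_get]
  intro i j hij
  by_contra hne
  rcases lt_trichotomy i.val j.val with hlt | heq | hgt
  · have t := chain'_transGen h j.1 j.2 i.1 hlt
    simp only [Fin.eta] at t
    rw [hij] at t
    exact hE _ t
  · exact hne (Fin.ext heq)
  · have t := chain'_transGen h i.1 i.2 j.1 hgt
    simp only [Fin.eta] at t
    rw [hij] at t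
    exact hE _ t

private lemma length_le_card [Fintype V] {E : V → V → Prop} {ℓ : V → α} {v : V}
    (hE : Acyclic E) {z : List α} (hz : z ∈ SubseqAt E ℓ v) :
    z.length ≤ Fintype.card V := by
  obtain ⟨p, ⟨⟨-, hch⟩, -⟩, hsub⟩ := hz
  calc z.length ≤ (p.map ℓ).length := hsub.length_le
    _ = p.length := by simp
    _ ≤ _ := (chain'_nodup hE hch).length_le_card

private lemma nil_mem_subseqAt {E : V → V → Prop} {ℓ : V → α} (v : V) :
    [] ∈ SubseqAt E ℓ v :=
  ⟨[v], ⟨⟨List.cons_ne_nil _ _, List.isChain_singleton v⟩, rfl⟩, List.nil_sublist _⟩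

private lemma singleton_mem_subseqAt {E : V → V → Prop} {ℓ : V → α} (v : V) :
    [ℓ v] ∈ SubseqAt E ℓ v :=
  ⟨[v], ⟨⟨List.cons_ne_nil _ _, List.isChain_singleton v⟩, rfl⟩, by simp⟩

private lemma extend_mem_subseqAt {E : V → V → Prop} {ℓ : V → α} {u v : V}
    (e : E u v) {z : List α} (hz : z ∈ SubseqAt E ℓ u) :
    z ++ [ℓ v] ∈ SubseqAt E ℓ v := by
  obtain ⟨p, ⟨⟨hne, hch⟩, hlast⟩, hsub⟩ := hz
  refine ⟨p ++ [v], ⟨⟨by simp, ?_⟩, List.getLast?_concat⟩, ?_⟩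
  · unfold List.Chain'
    rw [List.isChain_append]
    refine ⟨hch, List.isChain_singleton v, ?_⟩
    intro x hx y hy
    rw [hlast] at hx
    simp only [Option.mem_def, Option.some.injEq, List.head?_cons] at hx hy
    rw [← hx, ← hy]; exact e
  · rw [List.map_append]
    simpa using hsub.append (List.Sublist.refl [ℓ v])

private lemma decompose_subseqAt {E : V → V → Prop} {ℓ : V → α} {v : V} {z : List α} {a : α}
    (hz : z ++ [a] ∈ SubseqAt E ℓ v) (hne : z ≠ []) :
    ∃ u, E u v ∧ z ∈ SubseqAt E ℓ u := by
  obtain ⟨p, ⟨⟨hpne, hch⟩, hlast⟩, hsub⟩ := hz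
  have hzsub : z.Sublist (p.map ℓ).dropLast := concat_sublist_dropLast hsub
  rw [← List.map_dropLast] at hzsub
  have hq : p.dropLast ≠ [] := by
    intro h
    rw [h] at hzsub
    simp only [List.map_nil, List.sublist_nil] at hzsub
    exact hne hzsub
  have hv : p.getLast hpne = v := by
    rw [List.getLast?_eq_getLast hpne] at hlast
    exact Option.some.inj hlast
  have hsplit := List.dropLast_append_getLast hpne
  rw [hv] at hsplit
  rw [← hsplit] at hch
  unfold List.Chain' at hch
  rw [List.isChain_append] at hch
  refine ⟨p.dropLast.getLast hq, ?_,
    ⟨p.dropLast, ⟨⟨hq, hch.1⟩, List.getLast?_eq_getLast hq⟩, hzsub⟩⟩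
  exact hch.2.2 _ (List.getLast?_eq_getLast hq) v rfl

end Helpers

/-- For finite acyclic single-character labeled graphs `G1`, `G2`
and vertices `v1, v2` with equal labels,
`L(v1,v2) = 1 + max({L(u1,u2) : (u1,v1) ∈ E1, (u2,v2) ∈ E2} ∪ {0})`. -/
theorem stmt1 {V1 V2 α : Type*} [Fintype V1] [Fintype V2]
    (E1 : V1 → V1 → Prop) (ℓ1 : V1 → α) (E2 : V2 → V2 → Prop) (ℓ2 : V2 → α)
    (h1 : Acyclic E1) (h2 : Acyclic E2) (v1 : V1) (v2 : V2)
    (hlab : ℓ1 v1 = ℓ2 v2) :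
    Lval E1 ℓ1 E2 ℓ2 v1 v2 =
      1 + sSup (insert 0
        {n | ∃ u1 u2, E1 u1 v1 ∧ E2 u2 v2 ∧ n = Lval E1 ℓ1 E2 ℓ2 u1 u2}) := by
  classical
  set S := {n | ∃ u1 u2, E1 u1 v1 ∧ E2 u2 v2 ∧ n = Lval E1 ℓ1 E2 ℓ2 u1 u2} with hS
  have hbdd : ∀ (w1 : V1) (w2 : V2),
      BddAbove {n | ∃ z ∈ SubseqAt E1 ℓ1 w1 ∩ SubseqAt E2 ℓ2 w2, n = z.length} := by
    intro w1 w2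
    refine ⟨Fintype.card V1, ?_⟩
    rintro n ⟨z, ⟨hz1, -⟩, rfl⟩
    exact length_le_card h1 hz1
  have hne : ∀ (w1 : V1) (w2 : V2),
      Set.Nonempty {n | ∃ z ∈ SubseqAt E1 ℓ1 w1 ∩ SubseqAt E2 ℓ2 w2, n = z.length} :=
    fun w1 w2 => ⟨0, [], ⟨nil_mem_subseqAt w1, nil_mem_subseqAt w2⟩, rfl⟩
  have hLle : ∀ (w1 : V1) (w2 : V2), Lval E1 ℓ1 E2 ℓ2 w1 w2 ≤ Fintype.card V1 := by
    intro w1 w2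
    refine csSup_le (hne w1 w2) ?_
    rintro n ⟨z, ⟨hz1, -⟩, rfl⟩
    exact length_le_card h1 hz1
  have hSbdd : BddAbove (insert 0 S) := by
    refine ⟨Fintype.card V1, ?_⟩
    rintro n (rfl | ⟨u1, u2, -, -, rfl⟩)
    · exact Nat.zero_le _
    · exact hLle u1 u2
  apply _root_.le_antisymm
  · refine csSup_le (hne v1 v2) ?_
    rintro n ⟨z, ⟨hz1, hz2⟩, rfl⟩
    rcases List.eq_nil_or_concat z with rfl | ⟨z0, a, rfl⟩
    · simp
    · rcases eq_or_ne z0 [] with rfl | hz0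
      · simp
      · rw [List.concat_eq_append] at hz1 hz2
        obtain ⟨u1, e1, hu1⟩ := decompose_subseqAt hz1 hz0
        obtain ⟨u2, e2, hu2⟩ := decompose_subseqAt hz2 hz0
        have hle1 : z0.length ≤ Lval E1 ℓ1 E2 ℓ2 u1 u2 :=
          le_csSup (hbdd u1 u2) ⟨z0, ⟨hu1, hu2⟩, rfl⟩
        have hle2 : Lval E1 ℓ1 E2 ℓ2 u1 u2 ≤ sSup (insert 0 S) :=
          le_csSup hSbdd (Or.inr ⟨u1, u2, e1, e2, rfl⟩)
        simp only [List.concat_eq_append, List.length_append, List.length_singleton]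
        omega
  · have hmem := Nat.sSup_mem (Set.insert_nonempty 0 S) hSbdd
    rcases hmem with h0 | ⟨u1, u2, e1, e2, hEq⟩
    · rw [h0]
      refine le_csSup (hbdd v1 v2) ?_
      exact ⟨[ℓ1 v1], ⟨singleton_mem_subseqAt v1, by rw [hlab]; exact singleton_mem_subseqAt v2⟩, rfl⟩
    · have hLmem := Nat.sSup_mem (hne u1 u2) (hbdd u1 u2)
      obtain ⟨z, ⟨hz1, hz2⟩, hlen⟩ := hLmem
      have m1 : z ++ [ℓ1 v1] ∈ SubseqAt E1 ℓ1 v1 := extend_mem_subseqAt e1 hz1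
      have m2 : z ++ [ℓ1 v1] ∈ SubseqAt E2 ℓ2 v2 := by
        rw [hlab]; exact extend_mem_subseqAt e2 hz2
      have hle : (z ++ [ℓ1 v1]).length ≤ Lval E1 ℓ1 E2 ℓ2 v1 v2 :=
        le_csSup (hbdd v1 v2) ⟨z ++ [ℓ1 v1], ⟨m1, m2⟩, rfl⟩
      simp only [List.length_append, List.length_singleton] at hle
      have h' : Lval E1 ℓ1 E2 ℓ2 u1 u2 = z.length := hlen
      rw [hEq, h']
      omega
end

section
/- Let A, B, P be strings and let 1≤i≤|A|, 1≤j≤|B|, 1≤k≤|P| with A[i]=B[j]=P[k]. Then C(i,j,k) = C(i−1,j−1,k−1) + 1 (with the convention −∞+1=−∞). -/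
open List Relation

/-- `C(i,j,k)`: the maximum length (`⊥` = −∞ if none exists) of a string `z` such
that `P[1..k]` is a subsequence of `z` and `z` is a common subsequence of
`A[1..i]` and `B[1..j]`. -/
noncomputable def Cval {α : Type*} (A B P : List α) (i j k : ℕ) : WithBot ℕ :=
  maxLen {z | (P.take k).Sublist z ∧ z.Sublist (A.take i) ∧ z.Sublist (B.take j)}

lemma concat_sublist_cases {α : Type*} {z u : List α} {c : α} (h : z.Sublist (u ++ [c])) :
    z.Sublist u ∨ ∃ z₀, z = z₀ ++ [c] ∧ z₀.Sublist u := by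
  rw [List.sublist_append_iff] at h
  obtain ⟨l₁, l₂, rfl, h1, h2⟩ := h
  rcases List.sublist_singleton.mp h2 with rfl | rfl
  · left; simpa using h1
  · right; exact ⟨l₁, rfl, h1⟩

lemma finite_sSup_mem (s : Set (WithBot ℕ)) (h1 : s.Nonempty) (h2 : s.Finite) : sSup s ∈ s := by
  obtain ⟨a, ha, hmax⟩ := h2.exists_maximal h1
  have hg : IsGreatest s a := ⟨ha, fun b hb => by
    by_contra hlt; push_neg at hlt; exact hlt.ne (le_antisymm hlt.le (hmax hb hlt.le))⟩
  rwa [hg.csSup_eq]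

lemma key {α : Type*} (c : α) (A' B' P' : List α) :
    (sSup ((fun z : List α => (z.length : WithBot ℕ)) ''
      {z | (P' ++ [c]).Sublist z ∧ z.Sublist (A' ++ [c]) ∧ z.Sublist (B' ++ [c])}) : WithBot ℕ)
    = sSup ((fun z : List α => (z.length : WithBot ℕ)) ''
      {z | P'.Sublist z ∧ z.Sublist A' ∧ z.Sublist B'}) + 1 := by
  set S : Set (List α) := {z | (P' ++ [c]).Sublist z ∧ z.Sublist (A' ++ [c]) ∧ z.Sublist (B' ++ [c])} with hSdef
  set S' : Set (List α) := {z | P'.Sublist z ∧ z.Sublist A' ∧ z.Sublist B'} with hS'def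
  set f : List α → WithBot ℕ := fun z => (z.length : WithBot ℕ) with hf
  have hstep : ∀ z ∈ S, ∃ z' ∈ S', z.length ≤ z'.length + 1 := by
    rintro z ⟨hP, hA, hB⟩
    rcases concat_sublist_cases hA with hA' | ⟨z₀, rfl, hA'⟩
    · rcases concat_sublist_cases hB with hB' | ⟨z₀, rfl, hB'⟩
      · exact ⟨z, ⟨(List.sublist_append_left P' [c]).trans hP, hA', hB'⟩, by omega⟩
      · refine ⟨z₀, ⟨(List.append_sublist_append_right [c]).mp hP,
          (List.sublist_append_left z₀ [c]).trans hA', hB'⟩, by simp⟩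
    · rcases concat_sublist_cases hB with hB' | ⟨z₁, he, hB'⟩
      · exact ⟨z₀, ⟨(List.append_sublist_append_right [c]).mp hP, hA',
          (List.sublist_append_left z₀ [c]).trans hB'⟩, by simp⟩
      · have : z₀ = z₁ := by
          have := he
          simpa using congrArg (fun l => List.dropLast l) this
        subst this
        exact ⟨z₀, ⟨(List.append_sublist_append_right [c]).mp hP, hA', hB'⟩, by simp⟩
  have hstep2 : ∀ z' ∈ S', (z' ++ [c]) ∈ S := by
    rintro z' ⟨hP, hA, hB⟩
    exact ⟨(List.append_sublist_append_right [c]).mpr hP,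
      hA.append (List.Sublist.refl [c]), hB.append (List.Sublist.refl [c])⟩
  have hfinS : (f '' S).Finite := by
    apply Set.Finite.subset ((Set.finite_Iic (A'.length + 1)).image (fun n : ℕ => (n : WithBot ℕ)))
    rintro _ ⟨z, hz, rfl⟩
    exact ⟨z.length, by simpa using hz.2.1.length_le, rfl⟩
  have hfinS' : (f '' S').Finite := by
    apply Set.Finite.subset ((Set.finite_Iic A'.length).image (fun n : ℕ => (n : WithBot ℕ)))
    rintro _ ⟨z, hz, rfl⟩
    exact ⟨z.length, hz.2.1.length_le, rfl⟩
  by_cases h : S'.Nonempty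
  · obtain ⟨w, hw⟩ := h
    have hSne : S.Nonempty := ⟨w ++ [c], hstep2 w hw⟩
    apply _root_.le_antisymm
    · obtain ⟨z, hz, hlen⟩ := finite_sSup_mem _ (hSne.image f) hfinS
      obtain ⟨z', hz', hle⟩ := hstep z hz
      calc sSup (f '' S) = (z.length : WithBot ℕ) := hlen.symm
        _ ≤ (z'.length : WithBot ℕ) + 1 := by exact_mod_cast hle
        _ ≤ sSup (f '' S') + 1 :=
            add_le_add (le_csSup hfinS'.bddAbove ⟨z', hz', rfl⟩) le_rfl
    · obtain ⟨z', hz', hlen⟩ := finite_sSup_mem _ ((Set.nonempty_of_mem hw).image f) hfinS'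
      rw [← hlen]
      calc (z'.length : WithBot ℕ) + 1 = f (z' ++ [c]) := by simp [hf]
        _ ≤ sSup (f '' S) := le_csSup hfinS.bddAbove ⟨_, hstep2 z' hz', rfl⟩
  · have hSe : S = ∅ := by
      rw [Set.eq_empty_iff_forall_notMem]
      intro z hz
      obtain ⟨z', hz', -⟩ := hstep z hz
      exact h ⟨z', hz'⟩
    have hS'e : S' = ∅ := Set.not_nonempty_iff_eq_empty.mp h
    rw [hSe, hS'e]
    simp

lemma take_eq_concat {α : Type*} (l : List α) (n : ℕ) (h1 : 1 ≤ n) (h : n - 1 < l.length) :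
    l.take n = l.take (n - 1) ++ [l.get ⟨n - 1, h⟩] := by
  conv_lhs => rw [show n = (n - 1) + 1 from by omega]
  rw [List.take_succ]
  simp [List.getElem?_eq_getElem h]


/-- If `1 ≤ i ≤ |A|`, `1 ≤ j ≤ |B|`, `1 ≤ k ≤ |P|` and
`A[i] = B[j] = P[k]`, then `C(i,j,k) = C(i−1,j−1,k−1) + 1`
(with the convention `−∞ + 1 = −∞`). -/
theorem stmt3 {α : Type*} (A B P : List α) (i j k : ℕ)
    (hi1 : 1 ≤ i) (hi2 : i ≤ A.length) (hj1 : 1 ≤ j) (hj2 : j ≤ B.length)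
    (hk1 : 1 ≤ k) (hk2 : k ≤ P.length)
    (hAB : A.get ⟨i - 1, by omega⟩ = B.get ⟨j - 1, by omega⟩)
    (hAP : A.get ⟨i - 1, by omega⟩ = P.get ⟨k - 1, by omega⟩) :
    Cval A B P i j k = Cval A B P (i - 1) (j - 1) (k - 1) + 1 := by
  have hA := take_eq_concat A i hi1 (by omega)
  have hB := take_eq_concat B j hj1 (by omega)
  have hP := take_eq_concat P k hk1 (by omega)
  rw [← hAB] at hB
  rw [← hAP] at hP
  unfold Cval maxLen
  rw [hA, hB, hP]
  exact key _ _ _ _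
end

section
/- Let G1=(V1,E1,ℓ1), G2=(V2,E2,ℓ2), G3=(V3,E3,ℓ3) be finite acyclic labeled graphs with single-character vertex labels, and let v1∈V1, v2∈V2, v3∈V3 with ℓ1(v1)=ℓ2(v2)=ℓ3(v3). If v1, v2 and v3 each have at least one in-coming edge, then D(v1,v2,v3) = 1 + max{ D(u1,u2,u3) : (u1,v1)∈E1, (u2,v2)∈E2, (u3,v3)∈E3 } (with the conventions −∞+1=−∞ and max over values that may include −∞). -/
open List Relation

section AuxLemmas

open List Relation

lemma sublist_tail_of_cons' {α : Type*} {a : α} {s t : List α} (h : (a :: s).Sublist t) :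
    s.Sublist t.tail := by
  cases h with
  | cons b hb => exact ((List.sublist_cons_self a s).trans hb)
  | cons_cons b hb => exact hb

lemma dropLast_eq_rev' {α : Type*} : ∀ (l : List α), l.dropLast = l.reverse.tail.reverse := by
  intro l
  induction l using List.reverseRecOn with
  | nil => simp
  | append_singleton l a ih => simp

lemma sublist_dropLast_of_concat' {α : Type*} {a : α} {s t : List α}
    (h : (s ++ [a]).Sublist t) : s.Sublist t.dropLast := by
  have h1 : (a :: s.reverse).Sublist t.reverse := by simpa using h.reverse
  have h3 := (sublist_tail_of_cons' h1).reverse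
  rw [dropLast_eq_rev']
  simpa using h3

lemma sublist_dropLast' {α : Type*} {s t : List α} (h : s.Sublist t) :
    s.dropLast.Sublist t.dropLast := by
  rcases s.eq_nil_or_concat' with rfl | ⟨L, b, rfl⟩
  · simp
  · rw [List.dropLast_concat]
    exact sublist_dropLast_of_concat' h

lemma chain'_length_le_card {V : Type*} [Fintype V] {E : V → V → Prop} (hA : Acyclic E)
    {p : List V} (hp : p.Chain' E) : p.length ≤ Fintype.card V := by
  have h2 : p.Chain' (Relation.TransGen E) := hp.imp (fun a b h => Relation.TransGen.single h)
  have h3 : p.Pairwise (Relation.TransGen E) := List.isChain_iff_pairwise.mp h2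
  have h4 : p.Nodup := h3.imp (fun {a b} h => by rintro rfl; exact hA _ h)
  exact h4.length_le_card

lemma subseqAt_length_le {V α : Type*} [Fintype V] {E : V → V → Prop} {ℓ : V → α} {v : V}
    {z : List α} (hA : Acyclic E) (hz : z ∈ SubseqAt E ℓ v) : z.length ≤ Fintype.card V := by
  obtain ⟨p, ⟨⟨hne, hch⟩, _⟩, hs⟩ := hz
  calc z.length ≤ (p.map ℓ).length := hs.length_le
    _ = p.length := by simp
    _ ≤ _ := chain'_length_le_card hA hch

lemma csSup_mem_of_finite' {s : Set (WithBot ℕ)} (hne : s.Nonempty) (hfin : s.Finite) :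
    sSup s ∈ s := by
  obtain ⟨m, hm, hmax⟩ := hfin.exists_maximalFor id s hne
  have hub : ∀ b ∈ s, b ≤ m := by
    intro b hb
    rcases le_total b m with h | h
    · exact h
    · exact hmax hb h
  have : sSup s = m := le_antisymm (csSup_le hne hub) (le_csSup ⟨m, hub⟩ hm)
  rw [this]; exact hm

end AuxLemmas
section SICLemmas

open List Relation

variable {V1 V2 V3 α : Type*}
variable {E1 : V1 → V1 → Prop} {ℓ1 : V1 → α} {E2 : V2 → V2 → Prop} {ℓ2 : V2 → α}
  {E3 : V3 → V3 → Prop} {ℓ3 : V3 → α}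

lemma chain'_concat_of_last {V : Type*} {E : V → V → Prop} (p : List V) (u v : V)
    (hch : p.Chain' E) (hlast : p.getLast? = some u) (he : E u v) :
    (p ++ [v]).Chain' E := by
  refine List.isChain_append.mpr ⟨hch, List.isChain_singleton _, ?_⟩
  intro x hx y hy
  rw [hlast] at hx
  simp at hx hy
  subst hx; subst hy; exact he

lemma SIC_extend {u1 v1 : V1} {u2 v2 : V2} {u3 v3 : V3}
    (e1 : E1 u1 v1) (e2 : E2 u2 v2) (e3 : E3 u3 v3)
    (hl12 : ℓ1 v1 = ℓ2 v2) (hl23 : ℓ2 v2 = ℓ3 v3) {z : List α}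
    (hz : z ∈ SIC E1 ℓ1 E2 ℓ2 E3 ℓ3 u1 u2 u3) :
    z ++ [ℓ1 v1] ∈ SIC E1 ℓ1 E2 ℓ2 E3 ℓ3 v1 v2 v3 := by
  obtain ⟨⟨q, ⟨⟨hqne, hqch⟩, hqlast⟩, hqlm, hqsub⟩, ⟨p1, ⟨⟨hp1ne, hp1ch⟩, hp1last⟩, hzs1⟩,
    ⟨p2, ⟨⟨hp2ne, hp2ch⟩, hp2last⟩, hzs2⟩⟩ := hz
  refine ⟨⟨q ++ [v3], ⟨⟨by simp, chain'_concat_of_last q u3 v3 hqch hqlast e3⟩, by simp⟩, ?_, ?_⟩,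
    ⟨p1 ++ [v1], ⟨⟨by simp, chain'_concat_of_last p1 u1 v1 hp1ch hp1last e1⟩, by simp⟩, ?_⟩,
    ⟨p2 ++ [v2], ⟨⟨by simp, chain'_concat_of_last p2 u2 v2 hp2ch hp2last e2⟩, by simp⟩, ?_⟩⟩
  · intro w u hw
    apply hqlm w u
    rwa [List.head?_append_of_ne_nil _ hqne] at hw
  · rw [List.map_append, List.map_singleton, hl12.trans hl23]
    exact hqsub.append (List.Sublist.refl _)
  · rw [List.map_append, List.map_singleton]
    exact hzs1.append (List.Sublist.refl _)
  · rw [List.map_append, List.map_singleton, hl12]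
    exact hzs2.append (List.Sublist.refl _)

lemma SIC_shrink {v1 : V1} {v2 : V2} {v3 : V3} (hv3 : ∃ u, E3 u v3) {z : List α}
    (hz : z ∈ SIC E1 ℓ1 E2 ℓ2 E3 ℓ3 v1 v2 v3) :
    ∃ u1 u2 u3, E1 u1 v1 ∧ E2 u2 v2 ∧ E3 u3 v3 ∧
      z.dropLast ∈ SIC E1 ℓ1 E2 ℓ2 E3 ℓ3 u1 u2 u3 ∧ 2 ≤ z.length := by
  obtain ⟨⟨q, ⟨⟨hqne, hqch⟩, hqlast⟩, hqlm, hqsub⟩, ⟨p1, ⟨⟨hp1ne, hp1ch⟩, hp1last⟩, hzs1⟩,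
    ⟨p2, ⟨⟨hp2ne, hp2ch⟩, hp2last⟩, hzs2⟩⟩ := hz
  -- decompose q
  rcases q.eq_nil_or_concat' with rfl | ⟨L3, x3, rfl⟩
  · exact absurd rfl hqne
  have hx3 : x3 = v3 := by simpa [List.getLast?_concat] using hqlast
  subst x3
  have hL3ne : L3 ≠ [] := by
    rintro rfl
    obtain ⟨u, hu⟩ := hv3
    exact hqlm v3 u (by simp) hu
  rcases L3.eq_nil_or_concat' with rfl | ⟨M3, u3, rfl⟩
  · exact absurd rfl hL3ne
  have hsplit := List.isChain_append.mp hqch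
  have e3 : E3 u3 v3 :=
    hsplit.2.2 u3 (by simp [List.getLast?_concat]) v3 (by simp)
  have hz2 : 2 ≤ z.length := by
    have := hqsub.length_le
    simp at this
    omega
  -- decompose p1
  rcases p1.eq_nil_or_concat' with rfl | ⟨L1, x1, rfl⟩
  · exact absurd rfl hp1ne
  have hx1 : x1 = v1 := by simpa [List.getLast?_concat] using hp1last
  subst x1
  have hL1ne : L1 ≠ [] := by
    rintro rfl
    have := hzs1.length_le
    simp at this
    omega
  rcases L1.eq_nil_or_concat' with rfl | ⟨M1, u1, rfl⟩
  · exact absurd rfl hL1ne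
  have hs1 := List.isChain_append.mp hp1ch
  have e1 : E1 u1 v1 := hs1.2.2 u1 (by simp [List.getLast?_concat]) v1 (by simp)
  -- decompose p2
  rcases p2.eq_nil_or_concat' with rfl | ⟨L2, x2, rfl⟩
  · exact absurd rfl hp2ne
  have hx2 : x2 = v2 := by simpa [List.getLast?_concat] using hp2last
  subst x2
  have hL2ne : L2 ≠ [] := by
    rintro rfl
    have := hzs2.length_le
    simp at this
    omega
  rcases L2.eq_nil_or_concat' with rfl | ⟨M2, u2, rfl⟩
  · exact absurd rfl hL2ne
  have hs2 := List.isChain_append.mp hp2ch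
  have e2 : E2 u2 v2 := hs2.2.2 u2 (by simp [List.getLast?_concat]) v2 (by simp)
  refine ⟨u1, u2, u3, e1, e2, e3,
    ⟨⟨M3 ++ [u3], ⟨⟨by simp, hsplit.1⟩, by simp [List.getLast?_concat]⟩, ?_, ?_⟩,
      ⟨M1 ++ [u1], ⟨⟨by simp, hs1.1⟩, by simp [List.getLast?_concat]⟩, ?_⟩,
      ⟨M2 ++ [u2], ⟨⟨by simp, hs2.1⟩, by simp [List.getLast?_concat]⟩, ?_⟩⟩, hz2⟩
  · intro w u hw
    apply hqlm w u
    rw [List.head?_append_of_ne_nil _ (by simp)]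
    exact hw
  · exact sublist_dropLast_of_concat' (a := ℓ3 v3) (by simpa using hqsub)
  · have := sublist_dropLast' hzs1
    simpa [List.map_append, List.dropLast_concat] using this
  · have := sublist_dropLast' hzs2
    simpa [List.map_append, List.dropLast_concat] using this

end SICLemmas
/-- In finite acyclic graphs with `ℓ1(v1) = ℓ2(v2) = ℓ3(v3)`:
if `v1`, `v2` and `v3` each have an in-coming edge, then
`D(v1,v2,v3) = 1 + max{ D(u1,u2,u3) : (u1,v1) ∈ E1, (u2,v2) ∈ E2, (u3,v3) ∈ E3 }`
(with the convention `−∞ + 1 = −∞`). -/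
theorem stmt10 {V1 V2 V3 α : Type*} [Fintype V1] [Fintype V2] [Fintype V3]
    (E1 : V1 → V1 → Prop) (ℓ1 : V1 → α) (E2 : V2 → V2 → Prop) (ℓ2 : V2 → α)
    (E3 : V3 → V3 → Prop) (ℓ3 : V3 → α)
    (h1 : Acyclic E1) (h2 : Acyclic E2) (h3 : Acyclic E3)
    (v1 : V1) (v2 : V2) (v3 : V3)
    (hl12 : ℓ1 v1 = ℓ2 v2) (hl23 : ℓ2 v2 = ℓ3 v3)
    (hv1 : ∃ u, E1 u v1) (hv2 : ∃ u, E2 u v2) (hv3 : ∃ u, E3 u v3) :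
    Dval E1 ℓ1 E2 ℓ2 E3 ℓ3 v1 v2 v3 =
      1 + sSup {d : WithBot ℕ | ∃ u1 u2 u3, E1 u1 v1 ∧ E2 u2 v2 ∧ E3 u3 v3 ∧
        d = Dval E1 ℓ1 E2 ℓ2 E3 ℓ3 u1 u2 u3} := by
  classical
  set S := {d : WithBot ℕ | ∃ u1 u2 u3, E1 u1 v1 ∧ E2 u2 v2 ∧ E3 u3 v3 ∧
      d = Dval E1 ℓ1 E2 ℓ2 E3 ℓ3 u1 u2 u3} with hS
  have hDval : ∀ (w1 : V1) (w2 : V2) (w3 : V3), Dval E1 ℓ1 E2 ℓ2 E3 ℓ3 w1 w2 w3 =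
      sSup ((fun z : List α => (z.length : WithBot ℕ)) '' SIC E1 ℓ1 E2 ℓ2 E3 ℓ3 w1 w2 w3) := by
    intro w1 w2 w3; rfl
  have hbdd : ∀ (w1 : V1) (w2 : V2) (w3 : V3),
      BddAbove ((fun z : List α => (z.length : WithBot ℕ)) ''
        SIC E1 ℓ1 E2 ℓ2 E3 ℓ3 w1 w2 w3) := by
    intro w1 w2 w3
    refine ⟨((Fintype.card V1 : ℕ) : WithBot ℕ), ?_⟩
    rintro b ⟨z, hz, rfl⟩
    simp only []; exact WithBot.coe_le_coe.mpr (subseqAt_length_le h1 hz.2.1)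
  have hfin : ∀ (w1 : V1) (w2 : V2) (w3 : V3),
      ((fun z : List α => (z.length : WithBot ℕ)) ''
        SIC E1 ℓ1 E2 ℓ2 E3 ℓ3 w1 w2 w3).Finite := by
    intro w1 w2 w3
    apply Set.Finite.subset ((Set.finite_Iic (Fintype.card V1)).image
      (fun n : ℕ => (n : WithBot ℕ)))
    rintro b ⟨z, hz, rfl⟩
    exact ⟨z.length, subseqAt_length_le h1 hz.2.1, rfl⟩
  have hSne : S.Nonempty := by
    obtain ⟨u1, hu1⟩ := hv1; obtain ⟨u2, hu2⟩ := hv2; obtain ⟨u3, hu3⟩ := hv3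
    exact ⟨_, u1, u2, u3, hu1, hu2, hu3, rfl⟩
  have hSfin : S.Finite := by
    apply Set.Finite.subset (Set.finite_range
      (fun t : V1 × V2 × V3 => Dval E1 ℓ1 E2 ℓ2 E3 ℓ3 t.1 t.2.1 t.2.2))
    rintro d ⟨u1, u2, u3, _, _, _, rfl⟩
    exact ⟨(u1, u2, u3), rfl⟩
  have hSbdd : BddAbove S := hSfin.bddAbove
  apply _root_.le_antisymm
  · -- ≤
    rw [hDval v1 v2 v3]
    rcases (SIC E1 ℓ1 E2 ℓ2 E3 ℓ3 v1 v2 v3).eq_empty_or_nonempty with he | hne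
    · rw [he]
      simp [WithBot.sSup_empty]
    · apply csSup_le (hne.image _)
      rintro b ⟨z, hz, rfl⟩
      obtain ⟨u1, u2, u3, e1, e2, e3, hzd, hz2⟩ := SIC_shrink hv3 hz
      have ha : ((z.dropLast.length : ℕ) : WithBot ℕ) ≤ Dval E1 ℓ1 E2 ℓ2 E3 ℓ3 u1 u2 u3 := by
        rw [hDval]
        exact le_csSup (hbdd u1 u2 u3) ⟨z.dropLast, hzd, rfl⟩
      have hb : Dval E1 ℓ1 E2 ℓ2 E3 ℓ3 u1 u2 u3 ≤ sSup S :=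
        le_csSup hSbdd ⟨u1, u2, u3, e1, e2, e3, rfl⟩
      have hlen : z.length = 1 + z.dropLast.length := by
        rw [List.length_dropLast]; omega
      calc ((z.length : ℕ) : WithBot ℕ) = ((1 + z.dropLast.length : ℕ) : WithBot ℕ) := by
            rw [← hlen]
        _ = 1 + ((z.dropLast.length : ℕ) : WithBot ℕ) := by push_cast; rfl
        _ ≤ 1 + sSup S := add_le_add_right (ha.trans hb) 1
  · -- ≥
    obtain ⟨u1, u2, u3, e1, e2, e3, hd⟩ := csSup_mem_of_finite' hSne hSfin
    rw [hd]
    rcases (SIC E1 ℓ1 E2 ℓ2 E3 ℓ3 u1 u2 u3).eq_empty_or_nonempty with he | hne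
    · have : Dval E1 ℓ1 E2 ℓ2 E3 ℓ3 u1 u2 u3 = ⊥ := by
        rw [hDval, he]
        simp [WithBot.sSup_empty]
      rw [this]
      simp
    · obtain ⟨zm, hzm, hzmax⟩ : ∃ z ∈ SIC E1 ℓ1 E2 ℓ2 E3 ℓ3 u1 u2 u3,
          Dval E1 ℓ1 E2 ℓ2 E3 ℓ3 u1 u2 u3 = (z.length : WithBot ℕ) := by
        have hmem := csSup_mem_of_finite' (hne.image _) (hfin u1 u2 u3)
        rw [← hDval] at hmem
        obtain ⟨z, hz, hzeq⟩ := hmem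
        exact ⟨z, hz, hzeq.symm⟩
      have hext := SIC_extend e1 e2 e3 hl12 hl23 hzm
      have hle : (((zm.length + 1 : ℕ)) : WithBot ℕ) ≤ Dval E1 ℓ1 E2 ℓ2 E3 ℓ3 v1 v2 v3 := by
        rw [hDval]
        exact le_csSup (hbdd v1 v2 v3) ⟨zm ++ [ℓ1 v1], hext, by simp⟩
      rw [hzmax]
      calc 1 + ((zm.length : ℕ) : WithBot ℕ) = (((zm.length + 1 : ℕ)) : WithBot ℕ) := by
            push_cast; rw [add_comm]
        _ ≤ _ := hle
end

section
/- Let G1=(V1,E1,ℓ1), G2=(V2,E2,ℓ2), G3=(V3,E3,ℓ3) be labeled graphs with single-character vertex labels, and let v1∈V1, v2∈V2, v3∈V3 with ℓ1(v1)≠ℓ2(v2). Then S_IC(v1,v2,v3) = (⋃_{(u1,v1)∈E1} S_IC(u1,v2,v3)) ∪ (⋃_{(u2,v2)∈E2} S_IC(v1,u2,v3)); in particular, if neither v1 nor v2 has an in-coming edge, then S_IC(v1,v2,v3)=∅. -/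
open List Relation

section Helpers

variable {V α : Type*}

lemma sublist_concat_cases {z l : List α} {a : α} (h : z.Sublist (l ++ [a])) :
    z.Sublist l ∨ ∃ z', z = z' ++ [a] ∧ z'.Sublist l := by
  rw [List.sublist_append_iff] at h
  obtain ⟨z1, z2, rfl, h1, h2⟩ := h
  rcases List.sublist_singleton.mp h2 with rfl | rfl
  · left; simpa using h1
  · right; exact ⟨z1, rfl, h1⟩

lemma endsAt_split {E : V → V → Prop} {v : V} {p : List V} (h : EndsAt E v p) :
    p = p.dropLast ++ [v] :=
  (List.dropLast_append_getLast? v h.2).symm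

lemma endsAt_of_concat {E : V → V → Prop} {v : V} {p' : List V} (hne : p' ≠ [])
    (h : IsPath E (p' ++ [v])) :
    ∃ u, E u v ∧ EndsAt E u p' := by
  rw [IsPath] at h
  unfold List.Chain' at h
  rw [List.isChain_append] at h
  obtain ⟨-, hc, -, hrel⟩ := h
  refine ⟨p'.getLast hne, ?_, ⟨hne, hc⟩, List.getLast?_eq_getLast (h := hne)⟩
  exact hrel _ (by simp [List.getLast?_eq_getLast (h := hne)]) v (by simp)

lemma endsAt_extend {E : V → V → Prop} {u v : V} {p : List V} (h : EndsAt E u p) (huv : E u v) :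
    EndsAt E v (p ++ [v]) := by
  refine ⟨⟨by simp, ?_⟩, by simp [List.getLast?_concat]⟩
  unfold List.Chain'
  rw [List.isChain_append]
  refine ⟨h.1.2, List.isChain_singleton v, ?_⟩
  intro x hx y hy
  simp only [List.head?_cons, Option.mem_def, Option.some.injEq] at hy
  rw [Option.mem_def, h.2, Option.some.injEq] at hx
  subst hx; subst hy; exact huv

lemma subseqAt_mono {E : V → V → Prop} {ℓ : V → α} {u v : V} (huv : E u v) :
    SubseqAt E ℓ u ⊆ SubseqAt E ℓ v := by
  rintro z ⟨p, hp, hz⟩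
  refine ⟨p ++ [v], endsAt_extend hp huv, ?_⟩
  rw [List.map_append]
  exact hz.trans (List.sublist_append_left _ _)

end Helpers

/-- If `ℓ1(v1) ≠ ℓ2(v2)` then
`S_IC(v1,v2,v3) = (⋃_{(u1,v1)∈E1} S_IC(u1,v2,v3)) ∪ (⋃_{(u2,v2)∈E2} S_IC(v1,u2,v3))`;
in particular, if neither `v1` nor `v2` has an in-coming edge then
`S_IC(v1,v2,v3) = ∅`. -/
theorem stmt13 {V1 V2 V3 α : Type*} [Fintype V1] [Fintype V2] [Fintype V3]
    (E1 : V1 → V1 → Prop) (ℓ1 : V1 → α) (E2 : V2 → V2 → Prop) (ℓ2 : V2 → α)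
    (E3 : V3 → V3 → Prop) (ℓ3 : V3 → α) (v1 : V1) (v2 : V2) (v3 : V3)
    (hl : ℓ1 v1 ≠ ℓ2 v2) :
    (SIC E1 ℓ1 E2 ℓ2 E3 ℓ3 v1 v2 v3 =
      (⋃ u1 ∈ {u | E1 u v1}, SIC E1 ℓ1 E2 ℓ2 E3 ℓ3 u1 v2 v3) ∪
      (⋃ u2 ∈ {u | E2 u v2}, SIC E1 ℓ1 E2 ℓ2 E3 ℓ3 v1 u2 v3)) ∧
    ((∀ u, ¬ E1 u v1) → (∀ u, ¬ E2 u v2) →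
      SIC E1 ℓ1 E2 ℓ2 E3 ℓ3 v1 v2 v3 = ∅) := by
  have key : SIC E1 ℓ1 E2 ℓ2 E3 ℓ3 v1 v2 v3 =
      (⋃ u1 ∈ {u | E1 u v1}, SIC E1 ℓ1 E2 ℓ2 E3 ℓ3 u1 v2 v3) ∪
      (⋃ u2 ∈ {u | E2 u v2}, SIC E1 ℓ1 E2 ℓ2 E3 ℓ3 v1 u2 v3) := by
    ext z
    simp only [Set.mem_union, Set.mem_iUnion, Set.mem_setOf_eq, exists_prop]
    constructor
    · rintro ⟨⟨q, hq, hqlm, hqz⟩, ⟨p1, hp1, hz1⟩, ⟨p2, hp2, hz2⟩⟩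
      have hzne : z ≠ [] := by
        intro hznil
        have : q.map ℓ3 = [] := List.sublist_nil.mp (hznil ▸ hqz)
        exact hq.1.1 (List.map_eq_nil_iff.mp this)
      -- decompose p1
      have hsplit1 := endsAt_split hp1
      have hz1' : z.Sublist (p1.dropLast.map ℓ1 ++ [ℓ1 v1]) := by
        rw [show p1.dropLast.map ℓ1 ++ [ℓ1 v1] = (p1.dropLast ++ [v1]).map ℓ1 by simp,
          ← hsplit1]; exact hz1
      have hsplit2 := endsAt_split hp2
      have hz2' : z.Sublist (p2.dropLast.map ℓ2 ++ [ℓ2 v2]) := by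
        rw [show p2.dropLast.map ℓ2 ++ [ℓ2 v2] = (p2.dropLast ++ [v2]).map ℓ2 by simp,
          ← hsplit2]; exact hz2
      rcases sublist_concat_cases hz1' with hcase1 | ⟨z1, hz1eq, -⟩
      · -- z is a sublist of the labels of p1.dropLast
        have hd1ne : p1.dropLast ≠ [] := by
          intro hnil
          rw [hnil] at hcase1
          exact hzne (List.sublist_nil.mp (by simpa using hcase1))
        obtain ⟨u1, hu1, hEnds1⟩ := endsAt_of_concat hd1ne (hsplit1 ▸ hp1.1)
        exact Or.inl ⟨u1, hu1, ⟨q, hq, hqlm, hqz⟩, ⟨p1.dropLast, hEnds1, hcase1⟩,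
          ⟨p2, hp2, hz2⟩⟩
      · rcases sublist_concat_cases hz2' with hcase2 | ⟨z2, hz2eq, -⟩
        · have hd2ne : p2.dropLast ≠ [] := by
            intro hnil
            rw [hnil] at hcase2
            exact hzne (List.sublist_nil.mp (by simpa using hcase2))
          obtain ⟨u2, hu2, hEnds2⟩ := endsAt_of_concat hd2ne (hsplit2 ▸ hp2.1)
          exact Or.inr ⟨u2, hu2, ⟨q, hq, hqlm, hqz⟩, ⟨p1, hp1, hz1⟩,
            ⟨p2.dropLast, hEnds2, hcase2⟩⟩
        · -- both ends: contradiction with hl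
          exfalso
          apply hl
          have h1 : z.getLast? = some (ℓ1 v1) := by rw [hz1eq, List.getLast?_concat]
          have h2 : z.getLast? = some (ℓ2 v2) := by rw [hz2eq, List.getLast?_concat]
          rw [h1] at h2
          exact Option.some_injective _ h2
    · rintro (⟨u1, hu1, hq, h1, h2⟩ | ⟨u2, hu2, hq, h1, h2⟩)
      · exact ⟨hq, subseqAt_mono hu1 h1, h2⟩
      · exact ⟨hq, h1, subseqAt_mono hu2 h2⟩
  refine ⟨key, fun h1 h2 => ?_⟩
  rw [key]
  ext z
  simp [h1, h2]
end

section
/- Let G1=(V1,E1,ℓ1), G2=(V2,E2,ℓ2), G3=(V3,E3,ℓ3) be labeled graphs with single-character vertex labels. Then { z | there exists q ∈ ℓ3(MP(G3)) such that q is a subsequence of z, and z ∈ Subseq(G1) ∩ Subseq(G2) } = ⋃ { S_IC(v1,v2,v3) : v1∈V1, v2∈V2, v3∈V3 and v3 has no out-going edges }. Consequently, the SEQ-IC-LCS length of G1, G2, G3 equals the maximum of D(v1,v2,v3) over all v1∈V1, v2∈V2 and all v3∈V3 with no out-going edges. -/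
open List Relation

/-- Supremum of lengths of strings in `S`, valued in `ℕ∞ ∪ {−∞}`;
`⊥` (= −∞) if `S = ∅`. -/
noncomputable def supLen {α : Type*} (S : Set (List α)) : WithBot ℕ∞ :=
  sSup ((fun z : List α => ((z.length : ℕ∞) : WithBot ℕ∞)) '' S)

/-- `D(v1,v2,v3)` as a supremum (possibly infinite, `−∞` if `S_IC` is empty). -/
noncomputable def DvalE {V1 V2 V3 α : Type*}
    (E1 : V1 → V1 → Prop) (ℓ1 : V1 → α) (E2 : V2 → V2 → Prop) (ℓ2 : V2 → α)
    (E3 : V3 → V3 → Prop) (ℓ3 : V3 → α) (v1 : V1) (v2 : V2) (v3 : V3) :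
    WithBot ℕ∞ :=
  supLen (SIC E1 ℓ1 E2 ℓ2 E3 ℓ3 v1 v2 v3)

/-- The set of strings `z` containing as a subsequence the label of
some maximal path of `G3` with `z ∈ Subseq(G1) ∩ Subseq(G2)` equals the union of
`S_IC(v1,v2,v3)` over all `v1 ∈ V1`, `v2 ∈ V2`, and `v3 ∈ V3` without out-going edges;
consequently, the SEQ-IC-LCS length of `G1, G2, G3` equals the supremum of
`D(v1,v2,v3)` over all such triples. -/
theorem stmt14 {V1 V2 V3 α : Type*} [Fintype V1] [Fintype V2] [Fintype V3]
    (E1 : V1 → V1 → Prop) (ℓ1 : V1 → α) (E2 : V2 → V2 → Prop) (ℓ2 : V2 → α)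
    (E3 : V3 → V3 → Prop) (ℓ3 : V3 → α) :
    ({z | (∃ q, IsPath E3 q ∧ LeftMax E3 q ∧ RightMax E3 q ∧ (q.map ℓ3).Sublist z) ∧
          z ∈ SubseqG E1 ℓ1 ∧ z ∈ SubseqG E2 ℓ2}
        = ⋃ v1 : V1, ⋃ v2 : V2, ⋃ v3 ∈ {v3 : V3 | ∀ u, ¬ E3 v3 u},
            SIC E1 ℓ1 E2 ℓ2 E3 ℓ3 v1 v2 v3) ∧
    supLen {z | (∃ q, IsPath E3 q ∧ LeftMax E3 q ∧ RightMax E3 q ∧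
                  (q.map ℓ3).Sublist z) ∧
            z ∈ SubseqG E1 ℓ1 ∧ z ∈ SubseqG E2 ℓ2}
      = sSup {d | ∃ v1 v2 v3, (∀ u, ¬ E3 v3 u) ∧
          d = DvalE E1 ℓ1 E2 ℓ2 E3 ℓ3 v1 v2 v3} := by
  have hset : ({z | (∃ q, IsPath E3 q ∧ LeftMax E3 q ∧ RightMax E3 q ∧ (q.map ℓ3).Sublist z) ∧
          z ∈ SubseqG E1 ℓ1 ∧ z ∈ SubseqG E2 ℓ2}
        = ⋃ v1 : V1, ⋃ v2 : V2, ⋃ v3 ∈ {v3 : V3 | ∀ u, ¬ E3 v3 u},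
            SIC E1 ℓ1 E2 ℓ2 E3 ℓ3 v1 v2 v3) := by
    ext z
    simp only [Set.mem_setOf_eq, Set.mem_iUnion, SIC, SubseqAt, SubseqG]
    constructor
    · rintro ⟨⟨q, hq, hqL, hqR, hqz⟩, ⟨p1, hp1, hz1⟩, ⟨p2, hp2, hz2⟩⟩
      refine ⟨p1.getLast hp1.1, p2.getLast hp2.1, q.getLast hq.1, ?_, ?_⟩
      · exact fun u => hqR _ u (List.getLast?_eq_getLast hq.1)
      · exact ⟨⟨q, ⟨hq, List.getLast?_eq_getLast hq.1⟩, hqL, hqz⟩,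
          ⟨p1, ⟨hp1, List.getLast?_eq_getLast hp1.1⟩, hz1⟩,
          ⟨p2, ⟨hp2, List.getLast?_eq_getLast hp2.1⟩, hz2⟩⟩
    · rintro ⟨v1, v2, v3, hsink, ⟨q, ⟨hq, hqlast⟩, hqL, hqz⟩,
        ⟨p1, ⟨hp1, _⟩, hz1⟩, ⟨p2, ⟨hp2, _⟩, hz2⟩⟩
      refine ⟨⟨q, hq, hqL, fun w u hw => ?_, hqz⟩, ⟨p1, hp1, hz1⟩, ⟨p2, hp2, hz2⟩⟩
      rw [hqlast] at hw
      injection hw with h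
      subst h
      exact hsink u
  refine ⟨hset, ?_⟩
  rw [show supLen {z | (∃ q, IsPath E3 q ∧ LeftMax E3 q ∧ RightMax E3 q ∧
                  (q.map ℓ3).Sublist z) ∧ z ∈ SubseqG E1 ℓ1 ∧ z ∈ SubseqG E2 ℓ2}
      = supLen (⋃ v1 : V1, ⋃ v2 : V2, ⋃ v3 ∈ {v3 : V3 | ∀ u, ¬ E3 v3 u},
            SIC E1 ℓ1 E2 ℓ2 E3 ℓ3 v1 v2 v3) from congrArg _ hset]
  apply _root_.le_antisymm
  · apply sSup_le
    rintro x ⟨z, hz, rfl⟩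
    simp only [Set.mem_iUnion] at hz
    obtain ⟨v1, v2, v3, hsink, hz⟩ := hz
    refine le_trans ?_ (le_sSup ⟨v1, v2, v3, hsink, rfl⟩)
    exact le_sSup ⟨z, hz, rfl⟩
  · apply sSup_le
    rintro d ⟨v1, v2, v3, hsink, rfl⟩
    apply sSup_le
    rintro x ⟨z, hz, rfl⟩
    refine le_sSup ⟨z, ?_, rfl⟩
    simp only [Set.mem_iUnion]
    exact ⟨v1, v2, v3, hsink, hz⟩
end

section
/- Let G1=(V1,E1,ℓ1) and G2=(V2,E2,ℓ2) be finite labeled graphs with single-character vertex labels. Then the following are equivalent: (1) for every n∈ℕ there exists z ∈ Subseq(G1) ∩ Subseq(G2) with |z| ≥ n; (2) there exists a character c such that G1 contains a cycle through a vertex labeled c and G2 contains a cycle through a vertex labeled c. -/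
open List Relation

section MyAux
variable {V α : Type*}

lemma my_chain'_transGen {E : V → V → Prop} {p : List V} (hp : p.Chain' E) :
    ∀ j i (_ : i < j) (hj : j < p.length),
      Relation.TransGen E (p[i]'(by omega)) (p[j]'hj) := by
  intro j
  induction j with
  | zero => omega
  | succ k ih =>
    intro i hij hj
    have hstep : E (p[k]'(by omega)) (p[k+1]'hj) := by
      have := List.isChain_iff_getElem.mp hp k (by omega)
      simpa using this
    rcases Nat.lt_or_ge i k with h | h
    · exact (ih i h (by omega)).tail hstep
    · have : i = k := by omega
      subst this
      exact Relation.TransGen.single hstep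

lemma my_pump {E : V → V → Prop} {ℓ : V → α} {v : V} (hv : Relation.TransGen E v v)
    (n : ℕ) : ∃ p : List V, p ≠ [] ∧ p.Chain' E ∧ p.getLast? = some v ∧
      (List.replicate n (ℓ v)).Sublist (p.map ℓ) := by
  obtain ⟨u, huv, hutv⟩ := (Relation.TransGen.head'_iff).mp hv
  obtain ⟨l, hl, hlast⟩ := List.exists_isChain_cons_of_relationReflTransGen hutv
  set c : List V := u :: l with hc
  have hcc : c.Chain' E := hl
  have hclast : c.getLast? = some v := by
    rw [List.getLast?_eq_getLast_of_ne_nil (by simp [hc])]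
    exact congrArg some hlast
  have hvmem : v ∈ c := by
    obtain ⟨h, h2⟩ := List.mem_getLast?_eq_getLast (by rw [hclast]; rfl)
    rw [h2]; exact List.getLast_mem h
  induction n with
  | zero => exact ⟨[v], by simp, by constructor, by simp, by simp⟩
  | succ k ih =>
    obtain ⟨p, hpne, hpch, hplast, hps⟩ := ih
    refine ⟨p ++ c, by simp [hc], ?_, ?_, ?_⟩
    · refine hpch.append hcc ?_
      intro x hx y hy
      rw [hplast] at hx
      simp [hc] at hx hy
      rw [← hx, ← hy]; exact huv
    · rw [List.getLast?_append_of_ne_nil _ (by simp [hc])]; exact hclast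
    · rw [List.replicate_succ', List.map_append]
      exact hps.append (List.singleton_sublist.mpr (List.mem_map_of_mem (f := ℓ) hvmem))
end MyAux

theorem stmt16' {V1 V2 α : Type*} [Fintype V1] [Fintype V2]
    (E1 : V1 → V1 → Prop) (ℓ1 : V1 → α) (E2 : V2 → V2 → Prop) (ℓ2 : V2 → α) :
    (∀ n : ℕ, ∃ z : List α, (∃ p, (p ≠ [] ∧ p.Chain' E1) ∧ z.Sublist (p.map ℓ1)) ∧
        (∃ p, (p ≠ [] ∧ p.Chain' E2) ∧ z.Sublist (p.map ℓ2)) ∧ n ≤ z.length) ↔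
    (∃ c : α, (∃ v1, ℓ1 v1 = c ∧ Relation.TransGen E1 v1 v1) ∧
              (∃ v2, ℓ2 v2 = c ∧ Relation.TransGen E2 v2 v2)) := by
  constructor
  · intro h
    set N := Fintype.card (V1 × V2) + 1 with hN
    obtain ⟨z, ⟨p1, hp1, hs1⟩, ⟨p2, hp2, hs2⟩, hlen⟩ := h N
    obtain ⟨f1, hf1⟩ := List.sublist_iff_exists_fin_orderEmbedding_get_eq.mp hs1
    obtain ⟨f2, hf2⟩ := List.sublist_iff_exists_fin_orderEmbedding_get_eq.mp hs2
    have hl1 : (p1.map ℓ1).length = p1.length := List.length_map _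
    have hl2 : (p2.map ℓ2).length = p2.length := List.length_map _
    set g : Fin N → V1 × V2 := fun i =>
      (p1[(f1 (Fin.castLE hlen i)).val]'(by omega),
       p2[(f2 (Fin.castLE hlen i)).val]'(by omega)) with hg
    obtain ⟨i, j, hij, hgij⟩ := Fintype.exists_ne_map_eq_of_card_lt g (by simp [hN])
    -- wlog i < j
    have key : ∀ i j : Fin N, i < j → g i = g j →
        (∃ c : α, (∃ v1, ℓ1 v1 = c ∧ Relation.TransGen E1 v1 v1) ∧
              (∃ v2, ℓ2 v2 = c ∧ Relation.TransGen E2 v2 v2)) := by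
      intro i j hlt hgeq
      have h1lt : (f1 (Fin.castLE hlen i)).val < (f1 (Fin.castLE hlen j)).val :=
        f1.strictMono (by simpa using hlt)
      have h2lt : (f2 (Fin.castLE hlen i)).val < (f2 (Fin.castLE hlen j)).val :=
        f2.strictMono (by simpa using hlt)
      have ht1 := my_chain'_transGen hp1.2 (f1 (Fin.castLE hlen j)).val
        (f1 (Fin.castLE hlen i)).val h1lt (by omega)
      have ht2 := my_chain'_transGen hp2.2 (f2 (Fin.castLE hlen j)).val
        (f2 (Fin.castLE hlen i)).val h2lt (by omega)
      have e1 : (p1[(f1 (Fin.castLE hlen i)).val]'(by omega) : V1)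
          = p1[(f1 (Fin.castLE hlen j)).val]'(by omega) := congrArg Prod.fst hgeq
      have e2 : (p2[(f2 (Fin.castLE hlen i)).val]'(by omega) : V2)
          = p2[(f2 (Fin.castLE hlen j)).val]'(by omega) := congrArg Prod.snd hgeq
      refine ⟨z.get (Fin.castLE hlen i), ⟨p1[(f1 (Fin.castLE hlen i)).val]'(by omega), ?_, ?_⟩,
        ⟨p2[(f2 (Fin.castLE hlen i)).val]'(by omega), ?_, ?_⟩⟩
      · rw [hf1 (Fin.castLE hlen i)]
        simp [List.get_eq_getElem]
      · rw [e1]; rw [e1] at ht1; exact ht1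
      · rw [hf2 (Fin.castLE hlen i)]
        simp [List.get_eq_getElem]
      · rw [e2]; rw [e2] at ht2; exact ht2
    rcases hij.lt_or_gt with h | h
    · exact key i j h hgij
    · exact key j i h hgij.symm
  · rintro ⟨c, ⟨v1, hv1c, hv1⟩, ⟨v2, hv2c, hv2⟩⟩
    intro n
    obtain ⟨q1, hq1ne, hq1ch, _, hq1s⟩ := my_pump (ℓ := ℓ1) hv1 n
    obtain ⟨q2, hq2ne, hq2ch, _, hq2s⟩ := my_pump (ℓ := ℓ2) hv2 n
    exact ⟨List.replicate n c, ⟨q1, ⟨hq1ne, hq1ch⟩, hv1c ▸ hq1s⟩,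
      ⟨q2, ⟨hq2ne, hq2ch⟩, hv2c ▸ hq2s⟩, by rw [List.length_replicate]⟩


/-- For finite labeled graphs `G1`, `G2`, the set
`Subseq(G1) ∩ Subseq(G2)` contains strings of arbitrarily large length iff
there is a character `c` such that `G1` has a cycle through a vertex labeled `c`
and `G2` has a cycle through a vertex labeled `c`. -/
theorem stmt16 {V1 V2 α : Type*} [Fintype V1] [Fintype V2]
    (E1 : V1 → V1 → Prop) (ℓ1 : V1 → α) (E2 : V2 → V2 → Prop) (ℓ2 : V2 → α) :
    (∀ n : ℕ, ∃ z, z ∈ SubseqG E1 ℓ1 ∧ z ∈ SubseqG E2 ℓ2 ∧ n ≤ z.length) ↔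
    (∃ c : α, (∃ v1, ℓ1 v1 = c ∧ Relation.TransGen E1 v1 v1) ∧
              (∃ v2, ℓ2 v2 = c ∧ Relation.TransGen E2 v2 v2)) := by
  simpa only [SubseqG, IsPath, Set.mem_setOf_eq] using stmt16' E1 ℓ1 E2 ℓ2
end

section
/- Let G1=(V1,E1,ℓ1), G2=(V2,E2,ℓ2), G3=(V3,E3,ℓ3) be labeled graphs with single-character vertex labels, let v1∈V1, v2∈V2, v3∈V3, and suppose S_IC(v1,v2,v3) ≠ ∅. If there exist a character c, a cycle in G1 through v1 containing a vertex labeled c, and a cycle in G2 through v2 containing a vertex labeled c, then for every n∈ℕ there exists z ∈ S_IC(v1,v2,v3) with |z| ≥ n (so S_IC(v1,v2,v3) contains strings of arbitrarily large length). -/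
open List Relation

/-- Pumping a cycle: extend a path ending at `v` by `n` extra `c`'s. -/
lemma ext_path {V α : Type*} (E : V → V → Prop) (ℓ : V → α) (v : V) (c : α)
    (cyc : List V) (hch : cyc.Chain' E) (hlen : 2 ≤ cyc.length)
    (hh : cyc.head? = some v) (hl : cyc.getLast? = some v)
    (hw : ∃ w ∈ cyc, ℓ w = c)
    (p : List V) (hp : EndsAt E v p) :
    ∀ n, ∃ p', EndsAt E v p' ∧ (p.map ℓ ++ List.replicate n c).Sublist (p'.map ℓ) := by
  match cyc, hlen with
  | x :: y :: rest, _ =>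
    have hx : v = x := by simpa using hh.symm
    subst hx
    set t : List V := y :: rest with ht
    have htl : t.getLast? = some v := by
      exact (List.getLast?_cons_cons).symm.trans hl
    have htv : t.getLast (by simp [ht]) = v := by
      rw [List.getLast?_eq_getLast (by simp [ht] : t ≠ [])] at htl
      exact Option.some.inj htl
    have hchain_t : t.Chain' E := hch.tail
    have hEvy : E v y := by
      rcases List.isChain_cons_cons.mp hch with ⟨h1, _⟩
      exact h1
    have hwt : ∃ w ∈ t, ℓ w = c := by
      rcases hw with ⟨w, hwmem, hwc⟩
      rcases List.mem_cons.mp hwmem with h | h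
      · refine ⟨t.getLast (by simp [ht]), List.getLast_mem _, ?_⟩
        rw [htv, ← h]; exact hwc
      · exact ⟨w, h, hwc⟩
    intro n
    induction n with
    | zero => exact ⟨p, hp, by simp⟩
    | succ n ih =>
      obtain ⟨p', ⟨⟨hne', hch'⟩, hlast'⟩, hsub'⟩ := ih
      refine ⟨p' ++ t, ⟨⟨by simp [ht], ?_⟩, ?_⟩, ?_⟩
      · refine List.IsChain.append hch' hchain_t ?_
        intro a ha b hb
        have hb' : b = y := by simp [ht] at hb; exact hb.symm
        rw [show a = v by rw [hlast'] at ha; simpa using ha.symm, hb']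
        exact hEvy
      · rw [List.getLast?_append_of_ne_nil _ (by simp [ht] : t ≠ [])]
        exact htl
      · rw [List.replicate_succ', ← List.append_assoc, List.map_append]
        refine List.Sublist.append hsub' ?_
        rcases hwt with ⟨w, hwmem, hwc⟩
        rw [List.singleton_sublist]
        exact List.mem_map.mpr ⟨w, hwmem, hwc⟩

/-- If `S_IC(v1,v2,v3) ≠ ∅` and there is a character `c` together
with a cycle in `G1` through `v1` containing a vertex labeled `c` and a cycle in
`G2` through `v2` containing a vertex labeled `c`, then `S_IC(v1,v2,v3)` contains
strings of arbitrarily large length. -/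
theorem stmt17 {V1 V2 V3 α : Type*} [Fintype V1] [Fintype V2] [Fintype V3]
    (E1 : V1 → V1 → Prop) (ℓ1 : V1 → α) (E2 : V2 → V2 → Prop) (ℓ2 : V2 → α)
    (E3 : V3 → V3 → Prop) (ℓ3 : V3 → α) (v1 : V1) (v2 : V2) (v3 : V3)
    (hne : (SIC E1 ℓ1 E2 ℓ2 E3 ℓ3 v1 v2 v3).Nonempty)
    (c : α)
    (hc1 : ∃ p : List V1, p.Chain' E1 ∧ 2 ≤ p.length ∧
      p.head? = some v1 ∧ p.getLast? = some v1 ∧ ∃ w ∈ p, ℓ1 w = c)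
    (hc2 : ∃ p : List V2, p.Chain' E2 ∧ 2 ≤ p.length ∧
      p.head? = some v2 ∧ p.getLast? = some v2 ∧ ∃ w ∈ p, ℓ2 w = c) :
    ∀ n : ℕ, ∃ z ∈ SIC E1 ℓ1 E2 ℓ2 E3 ℓ3 v1 v2 v3, n ≤ z.length := by
  intro n
  obtain ⟨z₀, hq, h1, h2⟩ := hne
  obtain ⟨p1, hp1, hsub1⟩ := h1
  obtain ⟨p2, hp2, hsub2⟩ := h2
  obtain ⟨c1, hc1ch, hc1len, hc1h, hc1l, hc1w⟩ := hc1
  obtain ⟨c2, hc2ch, hc2len, hc2h, hc2l, hc2w⟩ := hc2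
  obtain ⟨p1', hp1', hsub1'⟩ :=
    ext_path E1 ℓ1 v1 c c1 hc1ch hc1len hc1h hc1l hc1w p1 hp1 n
  obtain ⟨p2', hp2', hsub2'⟩ :=
    ext_path E2 ℓ2 v2 c c2 hc2ch hc2len hc2h hc2l hc2w p2 hp2 n
  refine ⟨z₀ ++ List.replicate n c, ⟨?_, ?_, ?_⟩, ?_⟩
  · obtain ⟨q, hq1, hq2, hq3⟩ := hq
    exact ⟨q, hq1, hq2, hq3.trans (List.sublist_append_left _ _)⟩
  · exact ⟨p1', hp1', (List.Sublist.append hsub1 (List.Sublist.refl _)).trans hsub1'⟩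
  · exact ⟨p2', hp2', (List.Sublist.append hsub2 (List.Sublist.refl _)).trans hsub2'⟩
  · simp
end
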